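/- Stretch bound for the Cover procedure: for vertices u,v with d(u⇆v) ∈ [L/(1+ε), L) where 0 < ε ≤ 1/(2k-2), either the edge set returned by Cover(G,k,L,ε) contains a roundtrip path between u and v of length at most (2k-2)(1+ε)·d(u⇆v) ≤ (2k-1)·d(u⇆v), or R(u) ≤ (k-1)·d(u⇆v). -/

import Mathlib

open scoped ENNReal NNReal Classical

/-- The length of a walk, given as the list of vertices it visits, with respect to an
edge-weight function `wt` (`wt x y = ∞` encodes the absence of the edge `(x,y)`). -/
noncomputable def walkLen {V : Type*} (wt : V → V → ℝ≥0∞) : List V → ℝ≥0∞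
  | [] => 0
  | [_] => 0
  | a :: b :: t => wt a b + walkLen wt (b :: t)

/-- `l` is a directed walk from `u` to `v` staying inside the vertex set `S`. -/
def IsWalkIn {V : Type*} (S : Set V) (u v : V) (l : List V) : Prop :=
  l.head? = some u ∧ l.getLast? = some v ∧ ∀ x ∈ l, x ∈ S

/-- One-way shortest path distance from `u` to `v` in the subgraph induced by `S`. -/
noncomputable def owdist {V : Type*} (wt : V → V → ℝ≥0∞) (S : Set V) (u v : V) : ℝ≥0∞ :=
  ⨅ (l : List V) (_ : IsWalkIn S u v l), walkLen wt l

/-- Roundtrip distance between `u` and `v` in the subgraph induced by `S`. -/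
noncomputable def rtdist {V : Type*} (wt : V → V → ℝ≥0∞) (S : Set V) (u v : V) : ℝ≥0∞ :=
  owdist wt S u v + owdist wt S v u

/-- Weight function of the subgraph obtained by keeping only the edges in `E`. -/
noncomputable def restrictE {V : Type*} (wt : V → V → ℝ≥0∞) (E : Set (V × V)) :
    V → V → ℝ≥0∞ :=
  fun x y => if (x, y) ∈ E then wt x y else ⊤

section Lemmas
variable {V : Type*}

lemma walkLen_append (wt : V → V → ℝ≥0∞) :
    ∀ (l1 : List V) (b : V) (l2 : List V), l1.getLast? = some b →
      walkLen wt (l1 ++ l2) = walkLen wt l1 + walkLen wt (b :: l2)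
  | [], b, l2, hb => by simp at hb
  | [a], b, l2, hb => by
      simp only [List.getLast?_singleton, Option.some_inj] at hb
      subst hb
      cases l2 <;> simp [walkLen]
  | a :: a' :: t, b, l2, hb => by
      have ih := walkLen_append wt (a' :: t) b l2 (by simpa using hb)
      simp only [List.cons_append, List.append_eq, walkLen] at ih ⊢
      rw [ih, add_assoc]

lemma owdist_le_walkLen {wt : V → V → ℝ≥0∞} {S : Set V} {u v : V} {l : List V}
    (hl : IsWalkIn S u v l) : owdist wt S u v ≤ walkLen wt l :=
  iInf₂_le l hl

lemma glue (wt : V → V → ℝ≥0∞) {S : Set V} {a b c : V} {l1 l2 : List V}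
    (h1 : IsWalkIn S a b l1) (h2 : IsWalkIn S b c l2) :
    IsWalkIn S a c (l1 ++ l2.tail) ∧
      walkLen wt (l1 ++ l2.tail) = walkLen wt l1 + walkLen wt l2 := by
  obtain ⟨h1h, h1l, h1m⟩ := h1
  obtain ⟨h2h, h2l, h2m⟩ := h2
  cases l2 with
  | nil => simp at h2h
  | cons x t =>
    have hxb : x = b := by simpa using h2h
    subst hxb
    have hl1ne : l1 ≠ [] := by rintro rfl; simp at h1h
    refine ⟨⟨?_, ?_, ?_⟩, ?_⟩
    · rw [List.head?_append_of_ne_nil _ hl1ne]; exact h1h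
    · cases t with
      | nil =>
        simp only [List.tail_cons, List.append_nil]
        rw [h1l]
        simpa using h2l
      | cons y t' =>
        rw [List.tail_cons, List.getLast?_append_of_ne_nil _ (by simp)]
        simpa using h2l
    · intro z hz
      rcases List.mem_append.1 hz with hz | hz
      · exact h1m z hz
      · exact h2m z (List.mem_cons_of_mem _ (by simpa using hz))
    · rw [List.tail_cons, walkLen_append wt l1 x t h1l]

lemma owdist_mono_univ {wt : V → V → ℝ≥0∞} {S : Set V} {u v : V} :
    owdist wt Set.univ u v ≤ owdist wt S u v :=
  le_iInf₂ fun l hl => owdist_le_walkLen ⟨hl.1, hl.2.1, fun x _ => Set.mem_univ x⟩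

lemma rtdist_mono_univ {wt : V → V → ℝ≥0∞} {S : Set V} {u v : V} :
    rtdist wt Set.univ u v ≤ rtdist wt S u v :=
  add_le_add owdist_mono_univ owdist_mono_univ

lemma exists_walk_lt {wt : V → V → ℝ≥0∞} {S : Set V} {u v : V} {X : ℝ≥0∞}
    (hlt : owdist wt S u v < X) : ∃ l, IsWalkIn S u v l ∧ walkLen wt l < X := by
  have := hlt
  rw [owdist] at this
  simp only [iInf_lt_iff] at this
  obtain ⟨l, hl, h⟩ := this
  exact ⟨l, hl, h⟩

lemma owdist_triangle (wt : V → V → ℝ≥0∞) (S : Set V) (a b c : V) :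
    owdist wt S a c ≤ owdist wt S a b + owdist wt S b c := by
  by_cases hb : owdist wt S a b = ⊤
  · simp [hb]
  by_cases hc : owdist wt S b c = ⊤
  · simp [hc]
  refine ENNReal.le_of_forall_pos_le_add fun δ hδ _ => ?_
  have hδ2 : ((δ : ℝ≥0∞) / 2) ≠ 0 := by
    simp [ENNReal.div_eq_zero_iff, hδ.ne']
  obtain ⟨l1, hl1, hlen1⟩ := exists_walk_lt (ENNReal.lt_add_right hb hδ2)
  obtain ⟨l2, hl2, hlen2⟩ := exists_walk_lt (ENNReal.lt_add_right hc hδ2)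
  obtain ⟨hw, hwl⟩ := glue wt hl1 hl2
  calc owdist wt S a c ≤ walkLen wt (l1 ++ l2.tail) := owdist_le_walkLen hw
    _ = walkLen wt l1 + walkLen wt l2 := hwl
    _ ≤ (owdist wt S a b + (δ : ℝ≥0∞) / 2) + (owdist wt S b c + (δ : ℝ≥0∞) / 2) :=
        add_le_add hlen1.le hlen2.le
    _ = owdist wt S a b + owdist wt S b c + ((δ : ℝ≥0∞) / 2 + (δ : ℝ≥0∞) / 2) := by ring
    _ = owdist wt S a b + owdist wt S b c + (δ : ℝ≥0∞) := by rw [ENNReal.add_halves]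

lemma rtdist_triangle (wt : V → V → ℝ≥0∞) (S : Set V) (a b c : V) :
    rtdist wt S a c ≤ rtdist wt S a b + rtdist wt S b c := by
  unfold rtdist
  calc owdist wt S a c + owdist wt S c a
      ≤ (owdist wt S a b + owdist wt S b c) + (owdist wt S c b + owdist wt S b a) :=
        add_le_add (owdist_triangle wt S a b c) (owdist_triangle wt S c b a)
    _ = (owdist wt S a b + owdist wt S b a) + (owdist wt S b c + owdist wt S c b) := by ring

lemma walk_split (wt : V → V → ℝ≥0∞) {S : Set V} {u v b : V} {t1 t2 : List V}
    (hW : IsWalkIn S u v (t1 ++ b :: t2)) :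
    IsWalkIn S u b (t1 ++ [b]) ∧ IsWalkIn S b v (b :: t2) ∧
      walkLen wt (t1 ++ b :: t2) = walkLen wt (t1 ++ [b]) + walkLen wt (b :: t2) := by
  obtain ⟨hh, hl, hm⟩ := hW
  have hmem1 : ∀ x ∈ t1 ++ [b], x ∈ S := by
    intro x hx
    rcases List.mem_append.1 hx with hx | hx
    · exact hm x (by simp [hx])
    · simp only [List.mem_singleton] at hx; subst hx; exact hm x (by simp)
  have hmem2 : ∀ x ∈ b :: t2, x ∈ S := fun x hx => hm x (by simp [List.mem_cons.1 hx])
  have hhead : (t1 ++ [b]).head? = some u := by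
    cases t1 with
    | nil => simpa using hh
    | cons y t => rw [List.head?_append_of_ne_nil _ (by simp)]
                  rw [List.head?_append_of_ne_nil _ (by simp)] at hh
                  exact hh
  have hlast : (b :: t2).getLast? = some v := by
    cases t2 with
    | nil =>
      have : (t1 ++ [b]).getLast? = some v := by simpa using hl
      rw [List.getLast?_concat] at this
      simpa using this
    | cons z t' =>
      rw [List.getLast?_append_of_ne_nil _ (by simp)] at hl
      exact hl
  have hlen : walkLen wt (t1 ++ b :: t2) = walkLen wt (t1 ++ [b]) + walkLen wt (b :: t2) := by
    have : t1 ++ b :: t2 = (t1 ++ [b]) ++ t2 := by simp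
    rw [this, walkLen_append wt (t1 ++ [b]) b t2 (List.getLast?_concat)]
  exact ⟨⟨hhead, List.getLast?_concat, hmem1⟩, ⟨rfl, hlast, hmem2⟩, hlen⟩

lemma rtdist_le_closed_walk (wt : V → V → ℝ≥0∞) {S : Set V} {u w x : V} {W : List V}
    (hW : IsWalkIn S u u W) (hw : w ∈ W) (hx : x ∈ W) :
    rtdist wt S w x ≤ walkLen wt W := by
  obtain ⟨a1, a2, rfl⟩ := List.append_of_mem hw
  obtain ⟨hP1, hS1, hlen⟩ := walk_split wt hW
  rcases List.mem_append.1 hx with hx1 | hx2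
  · -- x ∈ a1, hence x ∈ a1 ++ [w]
    have hxP : x ∈ a1 ++ [w] := List.mem_append_left _ hx1
    obtain ⟨b1, b2, heq⟩ := List.append_of_mem hxP
    rw [heq] at hP1
    obtain ⟨hux, hxw, hlen2⟩ := walk_split wt hP1
    obtain ⟨hwx, hwxlen⟩ := glue wt hS1 hux
    calc rtdist wt S w x = owdist wt S w x + owdist wt S x w := rfl
      _ ≤ walkLen wt ((w :: a2) ++ (b1 ++ [x]).tail) + walkLen wt (x :: b2) :=
          add_le_add (owdist_le_walkLen hwx) (owdist_le_walkLen hxw)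
      _ = (walkLen wt (w :: a2) + walkLen wt (b1 ++ [x])) + walkLen wt (x :: b2) := by
          rw [hwxlen]
      _ = walkLen wt (a1 ++ w :: a2) := by rw [hlen, heq, hlen2]; ring
  · -- x ∈ w :: a2
    obtain ⟨b1, b2, heq⟩ := List.append_of_mem hx2
    rw [heq] at hS1
    obtain ⟨hwx, hxu, hlen2⟩ := walk_split wt hS1
    obtain ⟨hxw, hxwlen⟩ := glue wt hxu hP1
    calc rtdist wt S w x = owdist wt S w x + owdist wt S x w := rfl
      _ ≤ walkLen wt (b1 ++ [x]) + walkLen wt ((x :: b2) ++ (a1 ++ [w]).tail) :=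
          add_le_add (owdist_le_walkLen hwx) (owdist_le_walkLen hxw)
      _ = walkLen wt (b1 ++ [x]) + (walkLen wt (x :: b2) + walkLen wt (a1 ++ [w])) := by
          rw [hxwlen]
      _ = walkLen wt (a1 ++ w :: a2) := by rw [hlen, heq, hlen2]; ring

end Lemmas


theorem cover_stretch {V : Type*} [Fintype V] [DecidableEq V]
    (wt : V → V → ℝ≥0∞) (k : ℕ) (hk : 2 ≤ k)
    (L : ℝ≥0∞) (ε : ℝ≥0) (hε0 : 0 < ε) (hε : (ε : ℝ) ≤ 1 / (2 * (k : ℝ) - 2))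
    (R : V → ℝ≥0∞)
    (hRball : ∀ u : V,
      ((Finset.univ.filter fun v : V => rtdist wt Set.univ u v < R u).card : ℝ)
        < (Fintype.card V : ℝ) ^ (1 - 1 / (k : ℝ)))
    (hRmax : ∀ u : V, ∀ R' : ℝ≥0∞, R u < R' →
      (Fintype.card V : ℝ) ^ (1 - 1 / (k : ℝ))
        ≤ ((Finset.univ.filter fun v : V => rtdist wt Set.univ u v < R').card : ℝ))
    (T : ℕ) (U : ℕ → Finset V) (c : ℕ → V) (h : ℕ → ℕ) (step : ℕ → ℝ≥0∞)
    (hU0 : U 0 = Finset.univ) (hUT : U T = ∅)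
    (hc : ∀ i < T, c i ∈ U i ∧ ∀ x ∈ U i, R x ≤ R (c i))
    (hstep : ∀ i < T, step i = min (R (c i) / (((k : ℝ≥0∞)) - 1)) L)
    (hh : ∀ i < T, 1 ≤ h i ∧
      (((U i).filter fun v : V =>
          rtdist wt (U i : Set V) (c i) v < (h i : ℝ≥0∞) * step i).card : ℝ)
        < (Fintype.card V : ℝ) ^ ((h i : ℝ) / (k : ℝ)) ∧
      ∀ j : ℕ, 1 ≤ j → j < h i →
        (Fintype.card V : ℝ) ^ ((j : ℝ) / (k : ℝ))
          ≤ (((U i).filter fun v : V =>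
              rtdist wt (U i : Set V) (c i) v < (j : ℝ≥0∞) * step i).card : ℝ))
    (hrem : ∀ i < T, U (i + 1)
      = U i \ ((U i).filter fun v : V =>
          rtdist wt (U i : Set V) (c i) v ≤ ((h i - 1 : ℕ) : ℝ≥0∞) * step i))
    (Eh : Set (V × V))
    (hEh : ∀ i < T, ∀ x ∈ U i,
      rtdist wt (U i : Set V) (c i) x < (h i : ℝ≥0∞) * step i →
        owdist (restrictE wt Eh) Set.univ (c i) x ≤ owdist wt (U i : Set V) (c i) x ∧
        owdist (restrictE wt Eh) Set.univ x (c i) ≤ owdist wt (U i : Set V) x (c i)) :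
    ∀ u v : V,
      L / (1 + (ε : ℝ≥0∞)) ≤ rtdist wt Set.univ u v →
      rtdist wt Set.univ u v < L →
      rtdist (restrictE wt Eh) Set.univ u v
          ≤ ((2 * k - 2 : ℕ) : ℝ≥0∞) * (1 + (ε : ℝ≥0∞)) * rtdist wt Set.univ u v ∨
      R u ≤ ((k - 1 : ℕ) : ℝ≥0∞) * rtdist wt Set.univ u v := by
  intro u v hL1 hL2
  set d := rtdist wt Set.univ u v with hd
  by_cases hR : R u ≤ ((k - 1 : ℕ) : ℝ≥0∞) * d
  · exact Or.inr hR
  left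
  push_neg at hR
  -- basic finiteness
  have h1ε0 : (1 + (ε : ℝ≥0∞)) ≠ 0 := by simp
  have h1εt : (1 + (ε : ℝ≥0∞)) ≠ ⊤ := by
    simp [ENNReal.add_ne_top]
  have hLtop : L ≠ ⊤ := by
    intro hLt
    rw [hLt, ENNReal.top_div_of_ne_top h1εt, top_le_iff] at hL1
    rw [hL1, hLt] at hL2
    exact lt_irrefl _ hL2
  have hdtop : d ≠ ⊤ := ne_top_of_le_ne_top hLtop hL2.le
  -- L ≤ (1+ε) * d
  have hLd : L ≤ (1 + (ε : ℝ≥0∞)) * d := by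
    have := ENNReal.div_mul_cancel h1ε0 h1εt (b := L)
    calc L = L / (1 + (ε : ℝ≥0∞)) * (1 + (ε : ℝ≥0∞)) := this.symm
      _ ≤ d * (1 + (ε : ℝ≥0∞)) := mul_le_mul_left hL1 _
      _ = (1 + (ε : ℝ≥0∞)) * d := mul_comm _ _
  -- threshold m
  classical
  set F : Finset ℕ := (Finset.range T).filter (fun i => d < step i) with hF
  set m : ℝ≥0∞ := min L (F.inf step) with hm
  have hdm : d < m := by
    refine lt_min hL2 ?_
    rw [Finset.lt_inf_iff (lt_top_iff_ne_top.2 hdtop)]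
    intro b hb
    exact (Finset.mem_filter.1 hb).2
  obtain ⟨r, hdr, hrm⟩ := exists_between hdm
  have hrtop : r ≠ ⊤ := ne_top_of_le_ne_top hLtop (le_trans hrm.le (min_le_left _ _))
  set η : ℝ≥0∞ := (r - d) / 2 with hη
  have hη0 : η ≠ 0 := by
    rw [hη]
    simp only [ne_eq, ENNReal.div_eq_zero_iff, not_or]
    exact ⟨(tsub_pos_of_lt hdr).ne', by simp⟩
  -- pick near-optimal walks
  have hAtop : owdist wt Set.univ u v ≠ ⊤ := ne_top_of_le_ne_top hdtop le_self_add
  have hBtop : owdist wt Set.univ v u ≠ ⊤ := ne_top_of_le_ne_top hdtop le_add_self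
  obtain ⟨lP, hlP, hlenP⟩ := exists_walk_lt (ENNReal.lt_add_right hAtop hη0)
  obtain ⟨lQ, hlQ, hlenQ⟩ := exists_walk_lt (ENNReal.lt_add_right hBtop hη0)
  obtain ⟨hWwalk, hWlen⟩ := glue wt hlP hlQ
  set Wl : List V := lP ++ lQ.tail with hWldef
  have hlenW : walkLen wt Wl < r := by
    calc walkLen wt Wl = walkLen wt lP + walkLen wt lQ := hWlen
      _ < (owdist wt Set.univ u v + η) + (owdist wt Set.univ v u + η) :=
          ENNReal.add_lt_add hlenP hlenQ
      _ = d + (η + η) := by rw [hd, rtdist]; ring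
      _ = d + (r - d) := by rw [hη, ENNReal.add_halves]
      _ = r := add_tsub_cancel_of_le hdr.le
  have huW : u ∈ Wl := List.mem_of_mem_head? (by rw [hWwalk.1]; rfl)
  have hvW : v ∈ Wl := by
    have : v ∈ lP := List.mem_of_mem_getLast? (by rw [hlP.2.1]; rfl)
    exact List.mem_append_left _ this
  -- first round touching Wl
  have hex : ∃ j, ¬ ∀ z ∈ Wl, z ∈ U j := by
    refine ⟨T, fun hall => ?_⟩
    have := hall u huW
    rw [hUT] at this
    exact absurd this (Finset.notMem_empty u)
  set j : ℕ := Nat.find hex with hjdef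
  have hjspec : ¬ ∀ z ∈ Wl, z ∈ U j := Nat.find_spec hex
  have hj0 : j ≠ 0 := by
    intro hj
    apply hjspec
    rw [hj, hU0]
    intro z _
    exact Finset.mem_univ z
  set i : ℕ := j - 1 with hidef
  have hij : i + 1 = j := Nat.succ_pred_eq_of_pos (Nat.pos_of_ne_zero hj0)
  have hiT : i < T := by
    have : j ≤ T := Nat.find_min' hex (by
      intro hall
      have := hall u huW
      rw [hUT] at this
      exact absurd this (Finset.notMem_empty u))
    omega
  have hPi : ∀ z ∈ Wl, z ∈ U i := by
    by_contra hcon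
    exact (Nat.find_min hex (by omega : i < j)) hcon
  obtain ⟨w, hwW, hwU⟩ : ∃ z ∈ Wl, z ∉ U (i + 1) := by
    rw [hij]
    push_neg at hjspec
    exact hjspec
  have hwUi : w ∈ U i := hPi w hwW
  have hwrem : rtdist wt (U i : Set V) (c i) w ≤ ((h i - 1 : ℕ) : ℝ≥0∞) * step i := by
    by_contra hcon
    apply hwU
    rw [hrem i hiT]
    rw [Finset.mem_sdiff, Finset.mem_filter]
    exact ⟨hwUi, fun hmem => hcon hmem.2⟩
  -- step i > d
  have hcu := hc i hiT
  have hRc : ((k - 1 : ℕ) : ℝ≥0∞) * d < R (c i) := lt_of_lt_of_le hR (hcu.2 u (hPi u huW))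
  have hstepi := hstep i hiT
  have hk1cast : ((k : ℝ≥0∞)) - 1 = ((k - 1 : ℕ) : ℝ≥0∞) := by
    rw [ENNReal.natCast_sub, Nat.cast_one]
  have hk1ne0 : ((k - 1 : ℕ) : ℝ≥0∞) ≠ 0 := by
    simp only [ne_eq, Nat.cast_eq_zero]
    omega
  have hk1net : ((k - 1 : ℕ) : ℝ≥0∞) ≠ ⊤ := ENNReal.natCast_ne_top _
  have hdstep : d < step i := by
    rw [hstepi, hk1cast]
    refine lt_min ?_ hL2
    rw [ENNReal.lt_div_iff_mul_lt (Or.inl hk1ne0) (Or.inl hk1net), mul_comm]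
    exact hRc
  have hmstep : m ≤ step i := by
    refine le_trans (min_le_right _ _) (Finset.inf_le ?_)
    exact Finset.mem_filter.2 ⟨Finset.mem_range.2 hiT, hdstep⟩
  have hWstep : walkLen wt Wl < step i := hlenW.trans_le (hrm.le.trans hmstep)
  have hstepL : step i ≤ L := hstepi ▸ min_le_right _ _
  have hsteptop : step i ≠ ⊤ := ne_top_of_le_ne_top hLtop hstepL
  -- ball membership
  have hWU : IsWalkIn (U i : Set V) u u Wl := ⟨hWwalk.1, hWwalk.2.1, fun z hz => hPi z hz⟩
  have hball : ∀ z ∈ Wl, rtdist wt (U i : Set V) (c i) z < (h i : ℝ≥0∞) * step i := by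
    intro z hz
    have h1le : rtdist wt (U i : Set V) (c i) z
        ≤ rtdist wt (U i : Set V) (c i) w + rtdist wt (U i : Set V) w z :=
      rtdist_triangle wt _ (c i) w z
    have h2le : rtdist wt (U i : Set V) w z ≤ walkLen wt Wl :=
      rtdist_le_closed_walk wt hWU hwW hz
    have hhi1 : 1 ≤ h i := (hh i hiT).1
    have hcast : ((h i - 1 : ℕ) : ℝ≥0∞) + 1 = (h i : ℝ≥0∞) := by
      have h' : (h i - 1) + 1 = h i := by omega
      exact_mod_cast congrArg (fun n : ℕ => (n : ℝ≥0∞)) h'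
    calc rtdist wt (U i : Set V) (c i) z
        ≤ ((h i - 1 : ℕ) : ℝ≥0∞) * step i + walkLen wt Wl :=
          le_trans h1le (add_le_add hwrem h2le)
      _ < ((h i - 1 : ℕ) : ℝ≥0∞) * step i + step i :=
          ENNReal.add_lt_add_left (ENNReal.mul_ne_top (ENNReal.natCast_ne_top _) hsteptop) hWstep
      _ = (h i : ℝ≥0∞) * step i := by rw [← hcast, add_mul, one_mul]
  -- h i ≤ k - 1
  have hik : h i ≤ k - 1 := by
    by_contra hcon
    push_neg at hcon
    have hjc := (hh i hiT).2.2 (k - 1) (by omega) hcon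
    have hsub : ((U i).filter fun z : V =>
        rtdist wt (U i : Set V) (c i) z < ((k - 1 : ℕ) : ℝ≥0∞) * step i)
        ⊆ Finset.univ.filter fun z : V => rtdist wt Set.univ (c i) z < R (c i) := by
      intro z hz
      rw [Finset.mem_filter] at hz ⊢
      refine ⟨Finset.mem_univ _, ?_⟩
      have hstepdiv : step i ≤ R (c i) / ((k : ℝ≥0∞) - 1) := hstepi ▸ min_le_left _ _
      calc rtdist wt Set.univ (c i) z ≤ rtdist wt (U i : Set V) (c i) z := rtdist_mono_univ
        _ < ((k - 1 : ℕ) : ℝ≥0∞) * step i := hz.2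
        _ ≤ R (c i) := by
            rw [mul_comm]
            exact ENNReal.mul_le_of_le_div (by rw [hk1cast] at hstepdiv; exact hstepdiv)
    have hcard := Finset.card_le_card hsub
    have hRb := hRball (c i)
    have hexp : (((k - 1 : ℕ) : ℝ) / (k : ℝ)) = 1 - 1 / (k : ℝ) := by
      have hk0 : (k : ℝ) ≠ 0 := by positivity
      rw [Nat.cast_sub (by omega : 1 ≤ k), Nat.cast_one]
      field_simp
    rw [hexp] at hjc
    have : ((((U i).filter fun z : V =>
        rtdist wt (U i : Set V) (c i) z < ((k - 1 : ℕ) : ℝ≥0∞) * step i).card : ℝ))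
        ≤ (((Finset.univ.filter fun z : V =>
          rtdist wt Set.univ (c i) z < R (c i)).card : ℝ)) := Nat.cast_le.2 hcard
    linarith
  -- finish
  have huUi : u ∈ U i := hPi u huW
  have hvUi : v ∈ U i := hPi v hvW
  have hu_ball := hball u huW
  have hv_ball := hball v hvW
  obtain ⟨hEu1, hEu2⟩ := hEh i hiT u huUi hu_ball
  obtain ⟨hEv1, hEv2⟩ := hEh i hiT v hvUi hv_ball
  have t1 : owdist (restrictE wt Eh) Set.univ u v
      ≤ owdist (restrictE wt Eh) Set.univ u (c i) + owdist (restrictE wt Eh) Set.univ (c i) v :=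
    owdist_triangle _ _ _ _ _
  have t2 : owdist (restrictE wt Eh) Set.univ v u
      ≤ owdist (restrictE wt Eh) Set.univ v (c i) + owdist (restrictE wt Eh) Set.univ (c i) u :=
    owdist_triangle _ _ _ _ _
  have hnat : (2 * h i : ℕ) ≤ 2 * k - 2 := by omega
  calc rtdist (restrictE wt Eh) Set.univ u v
      = owdist (restrictE wt Eh) Set.univ u v + owdist (restrictE wt Eh) Set.univ v u := rfl
    _ ≤ (owdist (restrictE wt Eh) Set.univ u (c i) + owdist (restrictE wt Eh) Set.univ (c i) v)
        + (owdist (restrictE wt Eh) Set.univ v (c i) + owdist (restrictE wt Eh) Set.univ (c i) u) :=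
        add_le_add t1 t2
    _ ≤ (owdist wt (U i : Set V) u (c i) + owdist wt (U i : Set V) (c i) v)
        + (owdist wt (U i : Set V) v (c i) + owdist wt (U i : Set V) (c i) u) :=
        add_le_add (add_le_add hEu2 hEv1) (add_le_add hEv2 hEu1)
    _ = rtdist wt (U i : Set V) (c i) u + rtdist wt (U i : Set V) (c i) v := by
        rw [rtdist, rtdist]; ring
    _ ≤ (h i : ℝ≥0∞) * step i + (h i : ℝ≥0∞) * step i := add_le_add hu_ball.le hv_ball.le
    _ = ((2 * h i : ℕ) : ℝ≥0∞) * step i := by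
        rw [Nat.cast_mul, Nat.cast_ofNat, two_mul, add_mul]
    _ ≤ ((2 * k - 2 : ℕ) : ℝ≥0∞) * step i := mul_le_mul_left (Nat.cast_le.2 hnat) _
    _ ≤ ((2 * k - 2 : ℕ) : ℝ≥0∞) * L := mul_le_mul_right hstepL _
    _ ≤ ((2 * k - 2 : ℕ) : ℝ≥0∞) * ((1 + (ε : ℝ≥0∞)) * d) := mul_le_mul_right hLd _
    _ = ((2 * k - 2 : ℕ) : ℝ≥0∞) * (1 + (ε : ℝ≥0∞)) * d := (mul_assoc _ _ _).symm
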